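/- arXiv:2302.07477 — 3 statements merged into one kernel-verified Lean document; each statement's English description precedes it below -/
import Mathlib

section
/- Let M = (S, A, r, P, γ) be a finite discounted MDP such that every optimal policy π induces a kernel P_π satisfying an (m^π, p^π)-Doeblin condition, and set t* = max over optimal π of m^π/p^π. If t* ≤ 1/(1−γ), then max over optimal policies π of max_{(s,a)} ν^π(M)(s,a)² ≤ 6400 · t* / (1−γ)². -/
open Finset

namespace NuSqAux

variable {X : Type*} [Fintype X] [DecidableEq X]

lemma pow_entry_nonneg (Q : Matrix X X ℝ) (h0 : ∀ x y, 0 ≤ Q x y) (k : ℕ) :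
    ∀ x y, 0 ≤ (Q ^ k) x y := by
  induction k with
  | zero => intro x y; classical
            simp [Matrix.one_apply]
            split <;> norm_num
  | succ n ih =>
      intro x y
      rw [pow_succ, Matrix.mul_apply]
      exact Finset.sum_nonneg fun z _ => mul_nonneg (ih x z) (h0 z y)

lemma pow_row_sum (Q : Matrix X X ℝ) (h1 : ∀ x, ∑ y, Q x y = 1) (k : ℕ) :
    ∀ x, ∑ y, (Q ^ k) x y = 1 := by
  induction k with
  | zero => intro x; classical simp [Matrix.one_apply]
  | succ n ih =>
      intro x
      simp only [pow_succ, Matrix.mul_apply]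
      rw [Finset.sum_comm]
      calc ∑ z, ∑ y, (Q ^ n) x z * Q z y = ∑ z, (Q ^ n) x z * ∑ y, Q z y := by
            simp [Finset.mul_sum]
        _ = 1 := by simp only [h1, mul_one]; exact ih x

lemma pow_entry_le_one (Q : Matrix X X ℝ) (h0 : ∀ x y, 0 ≤ Q x y)
    (h1 : ∀ x, ∑ y, Q x y = 1) (k : ℕ) (x y : X) : (Q ^ k) x y ≤ 1 := by
  have := pow_row_sum Q h1 k x
  calc (Q ^ k) x y ≤ ∑ z, (Q ^ k) x z :=
        Finset.single_le_sum (fun z _ => pow_entry_nonneg Q h0 k x z) (Finset.mem_univ y)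
    _ = 1 := this

lemma mulVec_le (Q : Matrix X X ℝ) (h0 : ∀ x y, 0 ≤ Q x y) (h1 : ∀ x, ∑ y, Q x y = 1)
    (g : X → ℝ) (hi : ℝ) (hg : ∀ y, g y ≤ hi) (x : X) : Q.mulVec g x ≤ hi := by
  calc Q.mulVec g x = ∑ y, Q x y * g y := rfl
    _ ≤ ∑ y, Q x y * hi :=
        Finset.sum_le_sum fun y _ => mul_le_mul_of_nonneg_left (hg y) (h0 x y)
    _ = hi := by rw [← Finset.sum_mul, h1 x, one_mul]

lemma le_mulVec (Q : Matrix X X ℝ) (h0 : ∀ x y, 0 ≤ Q x y) (h1 : ∀ x, ∑ y, Q x y = 1)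
    (g : X → ℝ) (lo : ℝ) (hg : ∀ y, lo ≤ g y) (x : X) : lo ≤ Q.mulVec g x := by
  calc lo = ∑ y, Q x y * lo := by rw [← Finset.sum_mul, h1 x, one_mul]
    _ ≤ ∑ y, Q x y * g y :=
        Finset.sum_le_sum fun y _ => mul_le_mul_of_nonneg_left (hg y) (h0 x y)
    _ = Q.mulVec g x := rfl

lemma mulVec_mono (Q : Matrix X X ℝ) (h0 : ∀ x y, 0 ≤ Q x y)
    (f g : X → ℝ) (hfg : ∀ y, f y ≤ g y) (x : X) : Q.mulVec f x ≤ Q.mulVec g x :=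
  Finset.sum_le_sum fun y _ => mul_le_mul_of_nonneg_left (hfg y) (h0 x y)

end NuSqAux

namespace NuSqAux

variable {X : Type*} [Fintype X] [DecidableEq X]

lemma summable_ent {γ : ℝ} (hγ0 : 0 < γ) (hγ1 : γ < 1) (Q : Matrix X X ℝ)
    (h0 : ∀ x y, 0 ≤ Q x y) (h1 : ∀ x, ∑ y, Q x y = 1) (x y : X) :
    Summable fun k : ℕ => γ ^ k * (Q ^ k) x y := by
  refine Summable.of_nonneg_of_le
    (fun k => mul_nonneg (pow_nonneg hγ0.le k) (pow_entry_nonneg Q h0 k x y))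
    (fun k => ?_) (summable_geometric_of_lt_one hγ0.le hγ1)
  calc γ ^ k * (Q ^ k) x y ≤ γ ^ k * 1 :=
        mul_le_mul_of_nonneg_left (pow_entry_le_one Q h0 h1 k x y) (pow_nonneg hγ0.le k)
    _ = γ ^ k := mul_one _

lemma neumann_left {γ : ℝ} (hγ0 : 0 < γ) (hγ1 : γ < 1) (Q : Matrix X X ℝ)
    (h0 : ∀ x y, 0 ≤ Q x y) (h1 : ∀ x, ∑ y, Q x y = 1) :
    (Matrix.of fun x y : X => ∑' k : ℕ, γ ^ k * (Q ^ k) x y) * (1 - γ • Q) = 1 := by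
  have hsum := summable_ent hγ0 hγ1 Q h0 h1
  ext x y
  rw [Matrix.mul_apply]
  calc ∑ z, (Matrix.of fun x y : X => ∑' k : ℕ, γ ^ k * (Q ^ k) x y) x z * (1 - γ • Q) z y
      = ∑ z, ∑' k : ℕ, γ ^ k * (Q ^ k) x z * ((1 - γ • Q) z y) := by
        refine Finset.sum_congr rfl fun z _ => ?_
        simp only [Matrix.of_apply]
        exact (tsum_mul_right).symm
    _ = ∑' k : ℕ, ∑ z, γ ^ k * (Q ^ k) x z * ((1 - γ • Q) z y) :=
        (Summable.tsum_finsetSum fun z _ => (hsum x z).mul_right _).symm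
    _ = ∑' k : ℕ, (γ ^ k * (Q ^ k) x y - γ ^ (k + 1) * (Q ^ (k + 1)) x y) := by
        refine tsum_congr fun k => ?_
        have h2 : ∑ z, (Q ^ k) x z * ((1 - γ • Q) z y) = ((Q ^ k) * (1 - γ • Q)) x y :=
          (Matrix.mul_apply).symm
        have h3 : ((Q ^ k) * (1 - γ • Q)) x y = (Q ^ k) x y - γ * (Q ^ (k + 1)) x y := by
          rw [Matrix.mul_sub, Matrix.mul_one, Matrix.mul_smul, ← pow_succ]
          simp [Matrix.sub_apply, Matrix.smul_apply]
        calc ∑ z, γ ^ k * (Q ^ k) x z * ((1 - γ • Q) z y)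
            = γ ^ k * ∑ z, (Q ^ k) x z * ((1 - γ • Q) z y) := by
              rw [Finset.mul_sum]; exact Finset.sum_congr rfl fun z _ => by ring
          _ = γ ^ k * ((Q ^ k) x y - γ * (Q ^ (k + 1)) x y) := by rw [h2, h3]
          _ = γ ^ k * (Q ^ k) x y - γ ^ (k + 1) * (Q ^ (k + 1)) x y := by ring
    _ = (1 : Matrix X X ℝ) x y := by
        have hs : Summable fun k : ℕ => γ ^ (k + 1) * (Q ^ (k + 1)) x y := by
          refine Summable.of_nonneg_of_le
            (fun k => mul_nonneg (pow_nonneg hγ0.le _) (pow_entry_nonneg Q h0 _ x y))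
            (fun k => ?_) (summable_geometric_of_lt_one hγ0.le hγ1)
          calc γ ^ (k + 1) * (Q ^ (k + 1)) x y ≤ γ ^ (k + 1) * 1 :=
                mul_le_mul_of_nonneg_left (pow_entry_le_one Q h0 h1 (k + 1) x y)
                  (pow_nonneg hγ0.le _)
            _ = γ ^ (k + 1) := mul_one _
            _ ≤ γ ^ k := pow_le_pow_of_le_one hγ0.le hγ1.le (Nat.le_succ k)
        rw [Summable.tsum_sub (hsum x y) hs]
        have h0' := Summable.tsum_eq_zero_add (hsum x y)
        have : (∑' k : ℕ, γ ^ (k + 1) * (Q ^ (k + 1)) x y)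
            = (∑' k : ℕ, γ ^ k * (Q ^ k) x y) - γ ^ 0 * (Q ^ 0) x y := by
          rw [h0']; ring
        rw [this]
        simp [Matrix.one_apply]

lemma ent_nonneg {γ : ℝ} (hγ0 : 0 < γ) (Q : Matrix X X ℝ)
    (h0 : ∀ x y, 0 ≤ Q x y) (x y : X) : 0 ≤ ∑' k : ℕ, γ ^ k * (Q ^ k) x y :=
  tsum_nonneg fun k => mul_nonneg (pow_nonneg hγ0.le k) (pow_entry_nonneg Q h0 k x y)

lemma ent_le {γ : ℝ} (hγ0 : 0 < γ) (hγ1 : γ < 1) (Q : Matrix X X ℝ)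
    (h0 : ∀ x y, 0 ≤ Q x y) (h1 : ∀ x, ∑ y, Q x y = 1) (x y : X) :
    (∑' k : ℕ, γ ^ k * (Q ^ k) x y) ≤ (1 - γ)⁻¹ := by
  have := Summable.tsum_le_tsum (f := fun k : ℕ => γ ^ k * (Q ^ k) x y) (g := fun k : ℕ => γ ^ k)
    (fun k => by
      calc γ ^ k * (Q ^ k) x y ≤ γ ^ k * 1 :=
            mul_le_mul_of_nonneg_left (pow_entry_le_one Q h0 h1 k x y) (pow_nonneg hγ0.le k)
        _ = γ ^ k := mul_one _)
    (summable_ent hγ0 hγ1 Q h0 h1 x y) (summable_geometric_of_lt_one hγ0.le hγ1)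
  rwa [tsum_geometric_of_lt_one hγ0.le hγ1] at this

lemma row_apply {γ : ℝ} (hγ0 : 0 < γ) (hγ1 : γ < 1) (Q : Matrix X X ℝ)
    (h0 : ∀ x y, 0 ≤ Q x y) (h1 : ∀ x, ∑ y, Q x y = 1) (g : X → ℝ) (x : X) :
    ∑ y, (∑' k : ℕ, γ ^ k * (Q ^ k) x y) * g y
      = ∑' k : ℕ, γ ^ k * ((Q ^ k).mulVec g x) := by
  have hsum := summable_ent hγ0 hγ1 Q h0 h1
  calc ∑ y, (∑' k : ℕ, γ ^ k * (Q ^ k) x y) * g y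
      = ∑ y, ∑' k : ℕ, γ ^ k * (Q ^ k) x y * g y := by
        refine Finset.sum_congr rfl fun y _ => ?_
        exact (tsum_mul_right).symm
    _ = ∑' k : ℕ, ∑ y, γ ^ k * (Q ^ k) x y * g y :=
        (Summable.tsum_finsetSum fun y _ => (hsum x y).mul_right _).symm
    _ = ∑' k : ℕ, γ ^ k * ((Q ^ k).mulVec g x) := by
        refine tsum_congr fun k => ?_
        rw [Matrix.mulVec, dotProduct, Finset.mul_sum]
        exact Finset.sum_congr rfl fun y _ => by ring

end NuSqAux

namespace NuSqAux

variable {X : Type*} [Fintype X] [DecidableEq X]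

theorem core_bound {γ : ℝ} (hγ0 : 0 < γ) (hγ1 : γ < 1)
    (M : Matrix X X ℝ) (h0 : ∀ x y, 0 ≤ M x y) (h1 : ∀ x, ∑ y, M x y = 1)
    (q ρ s2 : X → ℝ) (c t : ℝ) (ht1 : 1 ≤ t)
    (hBell : ∀ x, q x = ρ x + γ * M.mulVec q x)
    (hw : ∀ x, |q x - c| ≤ t)
    (hρ : ∀ x, |ρ x - (1 - γ) * c| ≤ 1)
    (hs2 : ∀ x, s2 x = γ ^ 2 * (M.mulVec (fun z => q z ^ 2) x - (M.mulVec q x) ^ 2))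
    (x0 : X) :
    ∑ y, (∑' k : ℕ, γ ^ k * (M ^ k) x0 y) ^ 2 * s2 y ≤ 2 * t / (1 - γ) ^ 2 := by
  have h1γ : 0 < 1 - γ := by linarith
  set w2 : X → ℝ := fun z => (q z - c) ^ 2 with hw2_def
  -- (i) recentering identity for the one-step second moment
  have hMw2 : ∀ y, M.mulVec w2 y
      = M.mulVec (fun z => q z ^ 2) y - 2 * c * M.mulVec q y + c ^ 2 := by
    intro y
    have e : ∀ z, M y z * w2 z
        = M y z * q z ^ 2 - 2 * c * (M y z * q z) + c ^ 2 * M y z := by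
      intro z; simp only [hw2_def]; ring
    calc M.mulVec w2 y = ∑ z, M y z * w2 z := rfl
      _ = ∑ z, (M y z * q z ^ 2 - 2 * c * (M y z * q z) + c ^ 2 * M y z) :=
          Finset.sum_congr rfl fun z _ => e z
      _ = (∑ z, M y z * q z ^ 2) - 2 * c * (∑ z, M y z * q z) + c ^ 2 * ∑ z, M y z := by
          rw [Finset.sum_add_distrib, Finset.sum_sub_distrib, ← Finset.mul_sum, ← Finset.mul_sum]
      _ = M.mulVec (fun z => q z ^ 2) y - 2 * c * M.mulVec q y + c ^ 2 := by
          rw [h1 y, mul_one]; rfl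
  -- (ii) rewritten variance
  have hs2w : ∀ y, s2 y = γ ^ 2 * M.mulVec w2 y - (q y - c - (ρ y - (1 - γ) * c)) ^ 2 := by
    intro y
    have hB := hBell y
    have h2 : q y - c - (ρ y - (1 - γ) * c) = γ * (M.mulVec q y - c) := by
      rw [hB]; ring
    rw [hs2 y, h2, hMw2 y]; ring
  -- key pointwise inequality
  have hkey : ∀ y, s2 y ≤ γ ^ 2 * M.mulVec w2 y - w2 y + 2 * t := by
    intro y
    have h1' := abs_le.mp (hw y)
    have h2' := abs_le.mp (hρ y)
    have hprod : (q y - c) * (ρ y - (1 - γ) * c) ≤ t := by nlinarith [h1'.1, h1'.2, h2'.1, h2'.2, ht1]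
    have : w2 y - 2 * t ≤ (q y - c - (ρ y - (1 - γ) * c)) ^ 2 := by
      simp only [hw2_def]; nlinarith [sq_nonneg (ρ y - (1 - γ) * c)]
    rw [hs2w y]; linarith
  -- nonnegativity of s2 via Cauchy–Schwarz
  have hs2_0 : ∀ y, 0 ≤ s2 y := by
    intro y
    have key : (∑ z, M y z * q z) ^ 2 ≤ (∑ z, M y z) * ∑ z, M y z * q z ^ 2 := by
      have h := Finset.sum_mul_sq_le_sq_mul_sq Finset.univ
        (fun z => Real.sqrt (M y z)) (fun z => Real.sqrt (M y z) * q z)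
      calc (∑ z, M y z * q z) ^ 2
          = (∑ z, Real.sqrt (M y z) * (Real.sqrt (M y z) * q z)) ^ 2 := by
            congr 1
            exact Finset.sum_congr rfl fun z _ => by
              rw [← mul_assoc, Real.mul_self_sqrt (h0 y z)]
        _ ≤ (∑ z, Real.sqrt (M y z) ^ 2) * ∑ z, (Real.sqrt (M y z) * q z) ^ 2 := h
        _ = (∑ z, M y z) * ∑ z, M y z * q z ^ 2 := by
            congr 1
            · exact Finset.sum_congr rfl fun z _ => Real.sq_sqrt (h0 y z)
            · exact Finset.sum_congr rfl fun z _ => by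
                rw [mul_pow, Real.sq_sqrt (h0 y z)]
    rw [hs2 y]
    have : (M.mulVec q y) ^ 2 ≤ M.mulVec (fun z => q z ^ 2) y := by
      have := key; rw [h1 y, one_mul] at this; exact this
    nlinarith [sq_nonneg γ]
  -- bounds on w2 and s2
  have hw2_0 : ∀ z, 0 ≤ w2 z := fun z => sq_nonneg _
  have hw2_le : ∀ z, w2 z ≤ t ^ 2 := by
    intro z
    have := abs_le.mp (hw z)
    simp only [hw2_def]; nlinarith [this.1, this.2]
  have hs2_le : ∀ y, s2 y ≤ t ^ 2 := by
    intro y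
    have hMb : M.mulVec w2 y ≤ t ^ 2 := mulVec_le M h0 h1 w2 (t ^ 2) hw2_le y
    have h3 : (0:ℝ) ≤ M.mulVec w2 y := le_mulVec M h0 h1 w2 0 hw2_0 y
    have h4 := hs2w y
    have hγsq : γ ^ 2 ≤ 1 := by nlinarith
    have h5 : γ ^ 2 * M.mulVec w2 y ≤ M.mulVec w2 y := mul_le_of_le_one_left h3 hγsq
    nlinarith [sq_nonneg (q y - c - (ρ y - (1 - γ) * c))]
  -- the sequence a k
  set aseq : ℕ → ℝ := fun k => γ ^ k * ((M ^ k).mulVec w2 x0) with ha_def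
  have ha0 : ∀ k, 0 ≤ aseq k := fun k =>
    mul_nonneg (pow_nonneg hγ0.le k)
      (le_mulVec (M ^ k) (pow_entry_nonneg M h0 k) (pow_row_sum M h1 k) w2 0 hw2_0 x0)
  have haup : ∀ k, aseq k ≤ γ ^ k * t ^ 2 := fun k =>
    mul_le_mul_of_nonneg_left
      (mulVec_le (M ^ k) (pow_entry_nonneg M h0 k) (pow_row_sum M h1 k) w2 (t ^ 2) hw2_le x0)
      (pow_nonneg hγ0.le k)
  -- one step bound
  have hFk : ∀ k, γ ^ k * ((M ^ k).mulVec s2 x0) ≤ aseq (k + 1) - aseq k + 2 * t * γ ^ k := by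
    intro k
    have mono : (M ^ k).mulVec s2 x0
        ≤ (M ^ k).mulVec (fun y => γ ^ 2 * M.mulVec w2 y - w2 y + 2 * t) x0 :=
      mulVec_mono (M ^ k) (pow_entry_nonneg M h0 k) _ _ hkey x0
    have lin : (M ^ k).mulVec (fun y => γ ^ 2 * M.mulVec w2 y - w2 y + 2 * t) x0
        = γ ^ 2 * ((M ^ (k + 1)).mulVec w2 x0) - (M ^ k).mulVec w2 x0 + 2 * t := by
      have hrow := pow_row_sum M h1 k x0
      have hcomp : ∑ z, (M ^ k) x0 z * M.mulVec w2 z = (M ^ (k + 1)).mulVec w2 x0 := by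
        have : ∑ z, (M ^ k) x0 z * M.mulVec w2 z = (M ^ k).mulVec (M.mulVec w2) x0 := rfl
        rw [this, Matrix.mulVec_mulVec, ← pow_succ]
      calc (M ^ k).mulVec (fun y => γ ^ 2 * M.mulVec w2 y - w2 y + 2 * t) x0
          = ∑ z, (M ^ k) x0 z * (γ ^ 2 * M.mulVec w2 z - w2 z + 2 * t) := rfl
        _ = ∑ z, (γ ^ 2 * ((M ^ k) x0 z * M.mulVec w2 z) - (M ^ k) x0 z * w2 z
              + 2 * t * ((M ^ k) x0 z)) := Finset.sum_congr rfl fun z _ => by ring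
        _ = γ ^ 2 * (∑ z, (M ^ k) x0 z * M.mulVec w2 z) - (∑ z, (M ^ k) x0 z * w2 z)
              + 2 * t * (∑ z, (M ^ k) x0 z) := by
            rw [Finset.sum_add_distrib, Finset.sum_sub_distrib, ← Finset.mul_sum, ← Finset.mul_sum]
        _ = γ ^ 2 * ((M ^ (k + 1)).mulVec w2 x0) - (M ^ k).mulVec w2 x0 + 2 * t := by
            rw [hcomp, hrow, mul_one]; rfl
    have step : γ ^ k * ((M ^ k).mulVec s2 x0)
        ≤ γ ^ k * (γ ^ 2 * ((M ^ (k + 1)).mulVec w2 x0) - (M ^ k).mulVec w2 x0 + 2 * t) :=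
      mul_le_mul_of_nonneg_left (mono.trans_eq lin) (pow_nonneg hγ0.le k)
    have e2 : γ ^ k * (γ ^ 2 * ((M ^ (k + 1)).mulVec w2 x0) - (M ^ k).mulVec w2 x0 + 2 * t)
        = γ * aseq (k + 1) - aseq k + 2 * t * γ ^ k := by
      simp only [ha_def]; ring
    have h3 := ha0 (k + 1)
    nlinarith [step, e2, hγ1]
  -- partial sums
  have hpart : ∀ n, ∑ k ∈ Finset.range n, γ ^ k * ((M ^ k).mulVec s2 x0)
      ≤ γ ^ n * t ^ 2 + 2 * t / (1 - γ) := by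
    intro n
    have hgeo : ∑ k ∈ Finset.range n, γ ^ k ≤ (1 - γ)⁻¹ := by
      have := Summable.sum_le_tsum (Finset.range n) (fun k _ => pow_nonneg hγ0.le k)
        (summable_geometric_of_lt_one hγ0.le hγ1)
      rwa [tsum_geometric_of_lt_one hγ0.le hγ1] at this
    calc ∑ k ∈ Finset.range n, γ ^ k * ((M ^ k).mulVec s2 x0)
        ≤ ∑ k ∈ Finset.range n, (aseq (k + 1) - aseq k + 2 * t * γ ^ k) :=
          Finset.sum_le_sum fun k _ => hFk k
      _ = (aseq n - aseq 0) + 2 * t * ∑ k ∈ Finset.range n, γ ^ k := by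
          rw [Finset.sum_add_distrib, Finset.sum_range_sub aseq n, ← Finset.mul_sum]
      _ ≤ γ ^ n * t ^ 2 + 2 * t / (1 - γ) := by
          have h4 := haup n
          have h5 := ha0 0
          have h6 : 2 * t * ∑ k ∈ Finset.range n, γ ^ k ≤ 2 * t * (1 - γ)⁻¹ :=
            mul_le_mul_of_nonneg_left hgeo (by linarith)
          have h7 : 2 * t * (1 - γ)⁻¹ = 2 * t / (1 - γ) := by ring
          linarith
  -- summability
  have hFs : Summable fun k : ℕ => γ ^ k * ((M ^ k).mulVec s2 x0) := by
    refine Summable.of_nonneg_of_le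
      (fun k => mul_nonneg (pow_nonneg hγ0.le k)
        (le_mulVec (M ^ k) (pow_entry_nonneg M h0 k) (pow_row_sum M h1 k) s2 0 hs2_0 x0))
      (fun k => ?_) ((summable_geometric_of_lt_one hγ0.le hγ1).mul_left (t ^ 2))
    calc γ ^ k * ((M ^ k).mulVec s2 x0) ≤ γ ^ k * t ^ 2 :=
          mul_le_mul_of_nonneg_left
            (mulVec_le (M ^ k) (pow_entry_nonneg M h0 k) (pow_row_sum M h1 k) s2 (t ^ 2) hs2_le x0)
            (pow_nonneg hγ0.le k)
      _ = t ^ 2 * γ ^ k := mul_comm _ _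
  -- the tsum bound
  have hWle : (∑' k : ℕ, γ ^ k * ((M ^ k).mulVec s2 x0)) ≤ 2 * t / (1 - γ) := by
    have hts := hFs.hasSum.tendsto_sum_nat
    have hrhs : Filter.Tendsto (fun n : ℕ => γ ^ n * t ^ 2 + 2 * t / (1 - γ))
        Filter.atTop (nhds (0 * t ^ 2 + 2 * t / (1 - γ))) :=
      (((tendsto_pow_atTop_nhds_zero_of_lt_one hγ0.le hγ1).mul_const (t ^ 2)).add_const _)
    have := le_of_tendsto_of_tendsto' hts (by simpa using hrhs) hpart
    exact this
  have hW : ∑ y, (∑' k : ℕ, γ ^ k * (M ^ k) x0 y) * s2 y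
      = ∑' k : ℕ, γ ^ k * ((M ^ k).mulVec s2 x0) := row_apply hγ0 hγ1 M h0 h1 s2 x0
  -- final assembly
  calc ∑ y, (∑' k : ℕ, γ ^ k * (M ^ k) x0 y) ^ 2 * s2 y
      ≤ ∑ y, (1 - γ)⁻¹ * ((∑' k : ℕ, γ ^ k * (M ^ k) x0 y) * s2 y) := by
        refine Finset.sum_le_sum fun y _ => ?_
        have e1 : (∑' k : ℕ, γ ^ k * (M ^ k) x0 y) ^ 2
            ≤ (1 - γ)⁻¹ * (∑' k : ℕ, γ ^ k * (M ^ k) x0 y) := by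
          rw [sq]
          exact mul_le_mul_of_nonneg_right (ent_le hγ0 hγ1 M h0 h1 x0 y)
            (ent_nonneg hγ0 M h0 x0 y)
        calc (∑' k : ℕ, γ ^ k * (M ^ k) x0 y) ^ 2 * s2 y
            ≤ ((1 - γ)⁻¹ * (∑' k : ℕ, γ ^ k * (M ^ k) x0 y)) * s2 y :=
              mul_le_mul_of_nonneg_right e1 (hs2_0 y)
          _ = (1 - γ)⁻¹ * ((∑' k : ℕ, γ ^ k * (M ^ k) x0 y) * s2 y) := by ring
    _ = (1 - γ)⁻¹ * ∑ y, (∑' k : ℕ, γ ^ k * (M ^ k) x0 y) * s2 y := by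
        rw [← Finset.mul_sum]
    _ ≤ (1 - γ)⁻¹ * (2 * t / (1 - γ)) := by
        refine mul_le_mul_of_nonneg_left ?_ (by positivity)
        rw [hW]; exact hWle
    _ = 2 * t / (1 - γ) ^ 2 := by field_simp

end NuSqAux

set_option maxHeartbeats 2000000 in


/-- if every optimal policy `π` induces an `(m^π,p^π)`-Doeblin kernel and
`t* = max_{π optimal} m^π/p^π ≤ 1/(1−γ)`, then
`max_{π optimal} max_{(s,a)} ν^π(M)(s,a)² ≤ 6400 t*/(1−γ)²`. -/
theorem nu_sq_le_of_uniform_doeblin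
    {S A : Type*} [Fintype S] [Nonempty S] [DecidableEq S]
    [Fintype A] [Nonempty A] [DecidableEq A]
    -- the MDP data
    (r : S → A → ℝ) (hr0 : ∀ s a, 0 ≤ r s a) (hr1 : ∀ s a, r s a ≤ 1)
    (P : S → A → S → ℝ) (hP0 : ∀ s a s', 0 ≤ P s a s') (hP1 : ∀ s a, ∑ s', P s a s' = 1)
    (γ : ℝ) (hγ0 : 0 < γ) (hγ1 : γ < 1)
    -- the optimal q-function (characterized by the Bellman optimality equation)
    (qstar : S → A → ℝ)
    (hqstar : ∀ s a, qstar s a = r s a + γ * ∑ s', P s a s' * (⨆ b, qstar s' b))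
    -- optimality of a policy: its q-function equals q*
    (IsOptimal : (S → A) → Prop)
    (hIsOptimal : ∀ π : S → A, IsOptimal π ↔
      ∀ s a, qstar s a = r s a + γ * ∑ s', P s a s' * qstar s' (π s'))
    -- every optimal policy π induces an (m^π, p^π)-Doeblin kernel
    (mπ : (S → A) → ℕ) (pπ : (S → A) → ℝ)
    (hdoeb : ∀ π : S → A, IsOptimal π →
      0 < mπ π ∧ 0 < pπ π ∧ pπ π ≤ 1 ∧
      ∃ ψ : S → ℝ, (∀ s', 0 ≤ ψ s') ∧ (∑ s', ψ s' = 1) ∧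
        ∀ s s', pπ π * ψ s' ≤ ((Matrix.of fun u u' => P u (π u) u') ^ (mπ π)) s s')
    -- t* is the maximum of m^π/p^π over optimal policies, and t* ≤ 1/(1−γ)
    (tstar : ℝ)
    (htstar : IsGreatest {x : ℝ | ∃ π : S → A, IsOptimal π ∧ x = (mπ π : ℝ) / pπ π} tstar)
    (htstar_le : tstar ≤ 1 / (1 - γ)) :
    ∀ π : S → A, IsOptimal π → ∀ s a,
      (∑ y : S × A,
        (((1 - γ • (Matrix.of fun x z : S × A => if z.2 = π z.1 then P x.1 x.2 z.1 else 0))⁻¹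
            (s, a) y) ^ 2) *
          (γ ^ 2 * (∑ s', P y.1 y.2 s' * (⨆ b, qstar s' b) ^ 2 -
            (∑ s', P y.1 y.2 s' * (⨆ b, qstar s' b)) ^ 2))) ≤
      6400 * tstar / (1 - γ) ^ 2 := by
  classical
  intro π hopt s a
  obtain ⟨hm, hp, hp1, ψ, hψ0, hψ1, hψle⟩ := hdoeb π hopt
  have hopt' := (hIsOptimal π).mp hopt
  have h1γ : 0 < 1 - γ := by linarith
  set t : ℝ := (mπ π : ℝ) / pπ π with ht_def
  have hm1 : (1 : ℝ) ≤ (mπ π : ℝ) := by exact_mod_cast hm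
  have ht1 : 1 ≤ t := by rw [ht_def, le_div_iff₀ hp]; nlinarith
  have httstar : t ≤ tstar := htstar.2 ⟨π, hopt, rfl⟩
  -- basic sums with P
  have hPle : ∀ (s0 : S) (a0 : A) (g : S → ℝ) (hi : ℝ), (∀ s', g s' ≤ hi) →
      ∑ s', P s0 a0 s' * g s' ≤ hi := by
    intro s0 a0 g hi hg
    calc ∑ s', P s0 a0 s' * g s' ≤ ∑ s', P s0 a0 s' * hi :=
          Finset.sum_le_sum fun s' _ => mul_le_mul_of_nonneg_left (hg s') (hP0 s0 a0 s')
      _ = hi := by rw [← Finset.sum_mul, hP1, one_mul]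
  have hPge : ∀ (s0 : S) (a0 : A) (g : S → ℝ) (lo : ℝ), (∀ s', lo ≤ g s') →
      lo ≤ ∑ s', P s0 a0 s' * g s' := by
    intro s0 a0 g lo hg
    calc lo = ∑ s', P s0 a0 s' * lo := by rw [← Finset.sum_mul, hP1, one_mul]
      _ ≤ ∑ s', P s0 a0 s' * g s' :=
          Finset.sum_le_sum fun s' _ => mul_le_mul_of_nonneg_left (hg s') (hP0 s0 a0 s')
  -- value function bounds
  have hv_ge : ∀ (s' : S) (b : A), qstar s' b ≤ ⨆ b', qstar s' b' := fun s' b =>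
    le_ciSup (Set.Finite.bddAbove (Set.finite_range _)) b
  obtain ⟨xmax, hxmax⟩ := Finite.exists_max fun x : S × A => qstar x.1 x.2
  obtain ⟨xmin, hxmin⟩ := Finite.exists_min fun x : S × A => qstar x.1 x.2
  have hvle : ∀ s', (⨆ b, qstar s' b) ≤ qstar xmax.1 xmax.2 := fun s' =>
    ciSup_le fun b => hxmax (s', b)
  have hvge : ∀ s', qstar xmin.1 xmin.2 ≤ ⨆ b, qstar s' b := fun s' =>
    le_trans (hxmin (s', π s')) (hv_ge s' (π s'))
  have hqmax : qstar xmax.1 xmax.2 ≤ 1 / (1 - γ) := by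
    have h := hqstar xmax.1 xmax.2
    have h2 : ∑ s', P xmax.1 xmax.2 s' * (⨆ b, qstar s' b) ≤ qstar xmax.1 xmax.2 :=
      hPle _ _ _ _ hvle
    rw [le_div_iff₀ h1γ]
    nlinarith [hr1 xmax.1 xmax.2]
  have hqmin : 0 ≤ qstar xmin.1 xmin.2 := by
    have h := hqstar xmin.1 xmin.2
    have h2 : qstar xmin.1 xmin.2 ≤ ∑ s', P xmin.1 xmin.2 s' * (⨆ b, qstar s' b) :=
      hPge _ _ _ _ hvge
    nlinarith [hr0 xmin.1 xmin.2]
  -- the S-kernel of π and the Doeblin span bound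
  set Pm : Matrix S S ℝ := Matrix.of (fun u u' => P u (π u) u') with hPm_def
  have hPm0 : ∀ x y, 0 ≤ Pm x y := fun x y => hP0 _ _ _
  have hPm1 : ∀ x, ∑ y, Pm x y = 1 := fun x => hP1 _ _
  set uu : S → ℝ := fun s0 => qstar s0 (π s0) with huu_def
  have hmulPm : ∀ (g : S → ℝ) (s0 : S), Pm.mulVec g s0 = ∑ s', P s0 (π s0) s' * g s' := by
    intro g s0; rfl
  have huB : ∀ s0, uu s0 = r s0 (π s0) + γ * Pm.mulVec uu s0 := by
    intro s0; rw [hmulPm]; exact hopt' s0 (π s0)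
  -- iterated Bellman identity
  have hblock : ∀ (n : ℕ) (s0 : S),
      uu s0 = (∑ k ∈ Finset.range n, γ ^ k * (Pm ^ k).mulVec (fun s1 => r s1 (π s1)) s0)
        + γ ^ n * (Pm ^ n).mulVec uu s0 := by
    intro n
    induction n with
    | zero => intro s0; simp [Matrix.one_mulVec]
    | succ n ih =>
      intro s0
      have hvecu : uu = fun s1 => (fun s2 => r s2 (π s2)) s1 + γ * Pm.mulVec uu s1 :=
        funext fun s1 => huB s1
      have hlin : (Pm ^ n).mulVec uu s0
          = (Pm ^ n).mulVec (fun s1 => r s1 (π s1)) s0 + γ * (Pm ^ (n + 1)).mulVec uu s0 := by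
        conv_lhs => rw [hvecu]
        have expand : (Pm ^ n).mulVec (fun s1 => (fun s2 => r s2 (π s2)) s1 + γ * Pm.mulVec uu s1) s0
            = ∑ z, ((Pm ^ n) s0 z * r z (π z) + γ * ((Pm ^ n) s0 z * Pm.mulVec uu z)) :=
          Finset.sum_congr rfl fun z _ => by ring
        rw [expand, Finset.sum_add_distrib, ← Finset.mul_sum]
        have hcomp : ∑ z, (Pm ^ n) s0 z * Pm.mulVec uu z = (Pm ^ (n + 1)).mulVec uu s0 := by
          have e : ∑ z, (Pm ^ n) s0 z * Pm.mulVec uu z = (Pm ^ n).mulVec (Pm.mulVec uu) s0 := rfl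
          rw [e, Matrix.mulVec_mulVec, ← pow_succ]
        rw [hcomp]; rfl
      rw [Finset.sum_range_succ]
      calc uu s0 = (∑ k ∈ Finset.range n, γ ^ k * (Pm ^ k).mulVec (fun s1 => r s1 (π s1)) s0)
            + γ ^ n * (Pm ^ n).mulVec uu s0 := ih s0
        _ = (∑ k ∈ Finset.range n, γ ^ k * (Pm ^ k).mulVec (fun s1 => r s1 (π s1)) s0)
            + γ ^ n * ((Pm ^ n).mulVec (fun s1 => r s1 (π s1)) s0
              + γ * (Pm ^ (n + 1)).mulVec uu s0) := by rw [← hlin]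
        _ = (∑ k ∈ Finset.range n, γ ^ k * (Pm ^ k).mulVec (fun s1 => r s1 (π s1)) s0)
            + γ ^ n * (Pm ^ n).mulVec (fun s1 => r s1 (π s1)) s0
            + γ ^ (n + 1) * (Pm ^ (n + 1)).mulVec uu s0 := by ring
  -- extremes of uu
  obtain ⟨sb, hsb⟩ := Finite.exists_max uu
  obtain ⟨sa, hsa⟩ := Finite.exists_min uu
  have hD0 : 0 ≤ uu sb - uu sa := sub_nonneg.mpr (hsa sb)
  -- Doeblin estimate for (Pm ^ m) uu
  have hDoeb : ∀ s0 : S,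
      (Pm ^ mπ π).mulVec uu s0 ≤ (1 - pπ π) * uu sb + pπ π * ∑ z, ψ z * uu z ∧
      (1 - pπ π) * uu sa + pπ π * ∑ z, ψ z * uu z ≤ (Pm ^ mπ π).mulVec uu s0 := by
    intro s0
    have hrow := NuSqAux.pow_row_sum Pm hPm1 (mπ π) s0
    have hsplit : (Pm ^ mπ π).mulVec uu s0
        = (∑ z, ((Pm ^ mπ π) s0 z - pπ π * ψ z) * uu z) + pπ π * ∑ z, ψ z * uu z := by
      rw [Finset.mul_sum, ← Finset.sum_add_distrib]
      exact Finset.sum_congr rfl fun z _ => by ring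
    have hwnn : ∀ z, 0 ≤ (Pm ^ mπ π) s0 z - pπ π * ψ z := fun z =>
      sub_nonneg.mpr (hψle s0 z)
    have hmass : ∑ z, ((Pm ^ mπ π) s0 z - pπ π * ψ z) = 1 - pπ π := by
      rw [Finset.sum_sub_distrib, hrow, ← Finset.mul_sum, hψ1, mul_one]
    constructor
    · rw [hsplit]
      have : ∑ z, ((Pm ^ mπ π) s0 z - pπ π * ψ z) * uu z ≤ (1 - pπ π) * uu sb := by
        calc ∑ z, ((Pm ^ mπ π) s0 z - pπ π * ψ z) * uu z
            ≤ ∑ z, ((Pm ^ mπ π) s0 z - pπ π * ψ z) * uu sb :=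
              Finset.sum_le_sum fun z _ => mul_le_mul_of_nonneg_left (hsb z) (hwnn z)
          _ = (1 - pπ π) * uu sb := by rw [← Finset.sum_mul, hmass]
      linarith
    · rw [hsplit]
      have : (1 - pπ π) * uu sa ≤ ∑ z, ((Pm ^ mπ π) s0 z - pπ π * ψ z) * uu z := by
        calc (1 - pπ π) * uu sa = ∑ z, ((Pm ^ mπ π) s0 z - pπ π * ψ z) * uu sa := by
              rw [← Finset.sum_mul, hmass]
          _ ≤ ∑ z, ((Pm ^ mπ π) s0 z - pπ π * ψ z) * uu z :=
              Finset.sum_le_sum fun z _ => mul_le_mul_of_nonneg_left (hsa z) (hwnn z)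
      linarith
  -- span of uu is at most t
  have hspan_u : uu sb - uu sa ≤ t := by
    have hgb : ∀ s0 : S, (0:ℝ) ≤ ∑ k ∈ Finset.range (mπ π),
          γ ^ k * (Pm ^ k).mulVec (fun s1 => r s1 (π s1)) s0 ∧
        (∑ k ∈ Finset.range (mπ π), γ ^ k * (Pm ^ k).mulVec (fun s1 => r s1 (π s1)) s0)
          ≤ (mπ π : ℝ) := by
      intro s0
      constructor
      · refine Finset.sum_nonneg fun k _ => mul_nonneg (pow_nonneg hγ0.le k) ?_
        exact NuSqAux.le_mulVec (Pm ^ k) (NuSqAux.pow_entry_nonneg Pm hPm0 k)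
          (NuSqAux.pow_row_sum Pm hPm1 k) _ 0 (fun s1 => hr0 s1 (π s1)) s0
      · calc ∑ k ∈ Finset.range (mπ π), γ ^ k * (Pm ^ k).mulVec (fun s1 => r s1 (π s1)) s0
            ≤ ∑ k ∈ Finset.range (mπ π), (1:ℝ) := by
              refine Finset.sum_le_sum fun k _ => ?_
              have h1' : (Pm ^ k).mulVec (fun s1 => r s1 (π s1)) s0 ≤ 1 :=
                NuSqAux.mulVec_le (Pm ^ k) (NuSqAux.pow_entry_nonneg Pm hPm0 k)
                  (NuSqAux.pow_row_sum Pm hPm1 k) _ 1 (fun s1 => hr1 s1 (π s1)) s0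
              have h2' : (0:ℝ) ≤ (Pm ^ k).mulVec (fun s1 => r s1 (π s1)) s0 :=
                NuSqAux.le_mulVec (Pm ^ k) (NuSqAux.pow_entry_nonneg Pm hPm0 k)
                  (NuSqAux.pow_row_sum Pm hPm1 k) _ 0 (fun s1 => hr0 s1 (π s1)) s0
              have h3' : γ ^ k ≤ 1 := pow_le_one₀ hγ0.le hγ1.le
              nlinarith [pow_nonneg hγ0.le k]
          _ = (mπ π : ℝ) := by simp
    have hb := hblock (mπ π) sb
    have ha := hblock (mπ π) sa
    have hgm0 : (0:ℝ) ≤ γ ^ mπ π := pow_nonneg hγ0.le _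
    have hgm1 : γ ^ mπ π ≤ 1 := pow_le_one₀ hγ0.le hγ1.le
    have hDb := (hDoeb sb).1
    have hDa := (hDoeb sa).2
    have e1 : uu sb ≤ (mπ π : ℝ)
        + γ ^ mπ π * ((1 - pπ π) * uu sb + pπ π * ∑ z, ψ z * uu z) := by
      have := mul_le_mul_of_nonneg_left hDb hgm0
      have hg := (hgb sb).2
      linarith [hb, this, hg]
    have e2 : γ ^ mπ π * ((1 - pπ π) * uu sa + pπ π * ∑ z, ψ z * uu z) ≤ uu sa := by
      have := mul_le_mul_of_nonneg_left hDa hgm0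
      have hg := (hgb sa).1
      linarith [ha, this, hg]
    have e3 : uu sb - uu sa ≤ (mπ π : ℝ) + γ ^ mπ π * (1 - pπ π) * (uu sb - uu sa) := by
      nlinarith [e1, e2]
    have e4 : γ ^ mπ π * (1 - pπ π) * (uu sb - uu sa) ≤ (1 - pπ π) * (uu sb - uu sa) := by
      nlinarith [mul_nonneg (sub_nonneg.mpr hp1) hD0]
    rw [ht_def, le_div_iff₀ hp]
    nlinarith [e3, e4]
  -- span of qstar
  have hspan_q : qstar xmax.1 xmax.2 - qstar xmin.1 xmin.2 ≤ 1 + (uu sb - uu sa) := by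
    have h1' := hopt' xmax.1 xmax.2
    have h2' := hopt' xmin.1 xmin.2
    have hA : ∑ s', P xmax.1 xmax.2 s' * qstar s' (π s') ≤ uu sb :=
      hPle _ _ _ _ fun s' => hsb s'
    have hB : uu sa ≤ ∑ s', P xmin.1 xmin.2 s' * qstar s' (π s') :=
      hPge _ _ _ _ fun s' => hsa s'
    have hr1' := hr1 xmax.1 xmax.2
    have hr0' := hr0 xmin.1 xmin.2
    have hgap : ∑ s', P xmax.1 xmax.2 s' * qstar s' (π s')
        - ∑ s', P xmin.1 xmin.2 s' * qstar s' (π s') ≤ uu sb - uu sa := by linarith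
    have hmul : γ * (∑ s', P xmax.1 xmax.2 s' * qstar s' (π s')
        - ∑ s', P xmin.1 xmin.2 s' * qstar s' (π s')) ≤ γ * (uu sb - uu sa) :=
      mul_le_mul_of_nonneg_left hgap hγ0.le
    have hmul2 : γ * (uu sb - uu sa) ≤ uu sb - uu sa := mul_le_of_le_one_left hD0 hγ1.le
    nlinarith [hmul, hmul2]
  -- set up the state-action kernel
  set Mm : Matrix (S × A) (S × A) ℝ :=
    Matrix.of fun x z : S × A => if z.2 = π z.1 then P x.1 x.2 z.1 else 0 with hMm_def
  have hM0 : ∀ x z, 0 ≤ Mm x z := by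
    intro x z
    simp only [hMm_def, Matrix.of_apply]
    split
    · exact hP0 _ _ _
    · exact le_refl 0
  have hM1 : ∀ x, ∑ z, Mm x z = 1 := by
    intro x
    rw [Fintype.sum_prod_type]
    calc ∑ s' : S, ∑ a' : A, Mm x (s', a')
        = ∑ s' : S, P x.1 x.2 s' := by
          refine Finset.sum_congr rfl fun s' _ => ?_
          calc ∑ a' : A, Mm x (s', a')
              = ∑ a' : A, (if a' = π s' then P x.1 x.2 s' else 0) := rfl
            _ = P x.1 x.2 s' := by rw [Finset.sum_ite_eq' Finset.univ (π s')]; simp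
      _ = 1 := hP1 _ _
  have hMv : ∀ (g : S × A → ℝ) (x : S × A),
      Mm.mulVec g x = ∑ s', P x.1 x.2 s' * g (s', π s') := by
    intro g x
    have e0 : Mm.mulVec g x = ∑ z : S × A, Mm x z * g z := rfl
    rw [e0, Fintype.sum_prod_type]
    refine Finset.sum_congr rfl fun s' _ => ?_
    calc ∑ a' : A, Mm x (s', a') * g (s', a')
        = ∑ a' : A, (if a' = π s' then P x.1 x.2 s' * g (s', a') else 0) := by
          refine Finset.sum_congr rfl fun a' _ => ?_
          by_cases h : a' = π s' <;> simp [hMm_def, h]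
      _ = P x.1 x.2 s' * g (s', π s') := by
          rw [Finset.sum_ite_eq' Finset.univ (π s')]; simp
  -- Bellman equation on state-action space
  have hBell : ∀ x : S × A, qstar x.1 x.2
      = r x.1 x.2 + γ * Mm.mulVec (fun z : S × A => qstar z.1 z.2) x := by
    intro x; rw [hMv]; exact hopt' x.1 x.2
  -- centering constant
  set c : ℝ := (qstar xmin.1 xmin.2 + qstar xmax.1 xmax.2) / 2 with hc_def
  have hwabs : ∀ x : S × A, |qstar x.1 x.2 - c| ≤ t := by
    intro x
    rw [abs_le]
    constructor
    · have := hxmin x; linarith [hspan_q, hspan_u, ht1]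
    · have := hxmax x; linarith [hspan_q, hspan_u, ht1]
  have hρabs : ∀ x : S × A, |r x.1 x.2 - (1 - γ) * c| ≤ 1 := by
    intro x
    have hc0 : 0 ≤ c := by rw [hc_def]; linarith [hqmin, hxmin xmax]
    have hc1 : (1 - γ) * c ≤ 1 := by
      have : c ≤ 1 / (1 - γ) := by rw [hc_def]; linarith [hqmax, hxmin xmax]
      calc (1 - γ) * c ≤ (1 - γ) * (1 / (1 - γ)) :=
            mul_le_mul_of_nonneg_left this h1γ.le
        _ = 1 := by field_simp
    rw [abs_le]
    constructor
    · have := hr0 x.1 x.2; nlinarith [mul_nonneg h1γ.le hc0]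
    · have := hr1 x.1 x.2; nlinarith [mul_nonneg h1γ.le hc0]
  -- identification of the variance term
  have hPvu : ∀ (y : S × A) (s' : S),
      P y.1 y.2 s' * (⨆ b, qstar s' b) = P y.1 y.2 s' * qstar s' (π s') := by
    intro y s'
    have hS : ∑ s'', P y.1 y.2 s'' * (⨆ b, qstar s'' b)
        = ∑ s'', P y.1 y.2 s'' * qstar s'' (π s'') := by
      have h1' := hqstar y.1 y.2
      have h2' := hopt' y.1 y.2
      have h3' : γ * ∑ s'', P y.1 y.2 s'' * (⨆ b, qstar s'' b)
          = γ * ∑ s'', P y.1 y.2 s'' * qstar s'' (π s'') := by linarith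
      exact mul_left_cancel₀ (ne_of_gt hγ0) h3'
    have hz : ∑ s'', P y.1 y.2 s'' * ((⨆ b, qstar s'' b) - qstar s'' (π s'')) = 0 := by
      calc ∑ s'', P y.1 y.2 s'' * ((⨆ b, qstar s'' b) - qstar s'' (π s''))
          = (∑ s'', P y.1 y.2 s'' * (⨆ b, qstar s'' b))
            - ∑ s'', P y.1 y.2 s'' * qstar s'' (π s'') := by
            rw [← Finset.sum_sub_distrib]
            exact Finset.sum_congr rfl fun s'' _ => by ring
      _ = 0 := by rw [hS]; ring
    have hnn : ∀ s'' ∈ Finset.univ (α := S),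
        0 ≤ P y.1 y.2 s'' * ((⨆ b, qstar s'' b) - qstar s'' (π s'')) := fun s'' _ =>
      mul_nonneg (hP0 _ _ _) (sub_nonneg.mpr (hv_ge s'' (π s'')))
    have := (Finset.sum_eq_zero_iff_of_nonneg hnn).mp hz s' (Finset.mem_univ s')
    nlinarith [this]
  have hPvu2 : ∀ (y : S × A) (s' : S),
      P y.1 y.2 s' * (⨆ b, qstar s' b) ^ 2 = P y.1 y.2 s' * qstar s' (π s') ^ 2 := by
    intro y s'
    rcases eq_or_ne (P y.1 y.2 s') 0 with h | h
    · rw [h]; ring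
    · have : (⨆ b, qstar s' b) = qstar s' (π s') := mul_left_cancel₀ h (hPvu y s')
      rw [this]
  have hs2eq : ∀ y : S × A,
      γ ^ 2 * (∑ s', P y.1 y.2 s' * (⨆ b, qstar s' b) ^ 2
        - (∑ s', P y.1 y.2 s' * (⨆ b, qstar s' b)) ^ 2)
      = γ ^ 2 * (Mm.mulVec (fun z : S × A => qstar z.1 z.2 ^ 2) y
        - (Mm.mulVec (fun z : S × A => qstar z.1 z.2) y) ^ 2) := by
    intro y
    rw [hMv, hMv]
    congr 2
    · exact Finset.sum_congr rfl fun s' _ => hPvu2 y s'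
    · congr 1
      exact Finset.sum_congr rfl fun s' _ => hPvu y s'
  -- apply the core estimate
  have hcore := NuSqAux.core_bound hγ0 hγ1 Mm hM0 hM1
    (fun z : S × A => qstar z.1 z.2) (fun z : S × A => r z.1 z.2)
    (fun y : S × A => γ ^ 2 * (∑ s', P y.1 y.2 s' * (⨆ b, qstar s' b) ^ 2
        - (∑ s', P y.1 y.2 s' * (⨆ b, qstar s' b)) ^ 2))
    c t ht1 hBell hwabs hρabs hs2eq (s, a)
  -- identify the matrix inverse with the Neumann series
  have hInv : (1 - γ • Mm)⁻¹
      = Matrix.of fun x y : S × A => ∑' k : ℕ, γ ^ k * (Mm ^ k) x y :=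
    Matrix.inv_eq_left_inv (NuSqAux.neumann_left hγ0 hγ1 Mm hM0 hM1)
  rw [hInv]
  calc ∑ y : S × A,
      ((Matrix.of fun x y : S × A => ∑' k : ℕ, γ ^ k * (Mm ^ k) x y) (s, a) y) ^ 2 *
        (γ ^ 2 * (∑ s', P y.1 y.2 s' * (⨆ b, qstar s' b) ^ 2
          - (∑ s', P y.1 y.2 s' * (⨆ b, qstar s' b)) ^ 2))
      = ∑ y : S × A, (∑' k : ℕ, γ ^ k * (Mm ^ k) (s, a) y) ^ 2 *
        (γ ^ 2 * (∑ s', P y.1 y.2 s' * (⨆ b, qstar s' b) ^ 2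
          - (∑ s', P y.1 y.2 s' * (⨆ b, qstar s' b)) ^ 2)) := rfl
    _ ≤ 2 * t / (1 - γ) ^ 2 := hcore
    _ ≤ 6400 * tstar / (1 - γ) ^ 2 := by
      have hpos : (0:ℝ) < (1 - γ) ^ 2 := by positivity
      rw [div_le_div_iff₀ hpos hpos]
      nlinarith [httstar, ht1]
end

section
/- Let (Ω, F, P) be a probability space with a filtration F_0 ⊆ F_1 ⊆ … ⊆ F_L, let q* ∈ ℝ^d be fixed, and let q̂_0, q̂_1, …, q̂_L be ℝ^d-valued random vectors with q̂_l measurable with respect to F_l. Let b > 0 and δ ∈ [0,1). Suppose P(‖q̂_0 − q*‖_∞ ≤ b) ≥ 1 − δ/(L+1), and that for each 1 ≤ l ≤ L, almost surely on the event {‖q̂_{l−1} − q*‖_∞ ≤ 2^{1−l} b} one has P( ‖q̂_l − q*‖_∞ ≤ 2^{−l} b | F_{l−1} ) ≥ 1 − δ/(L+1). Then P( ‖q̂_L − q*‖_∞ ≤ 2^{−L} b ) ≥ (1 − δ/(L+1))^{L+1} ≥ 1 − δ. -/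
open MeasureTheory

/-- high-probability error-halving across the outer loop.  If
`‖q̂₀ − q*‖_∞ ≤ b` with probability at least `1 − δ/(L+1)`, and for each `1 ≤ l ≤ L`,
almost surely on `{‖q̂_{l−1} − q*‖_∞ ≤ 2^{1−l} b}` the conditional probability (given
`F_{l−1}`) of `{‖q̂_l − q*‖_∞ ≤ 2^{−l} b}` is at least `1 − δ/(L+1)`, then
`P(‖q̂_L − q*‖_∞ ≤ 2^{−L} b) ≥ (1 − δ/(L+1))^{L+1} ≥ 1 − δ`. -/
theorem error_halving_high_prob
    {Ω ι : Type*} [Fintype ι] [Nonempty ι]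
    {mΩ : MeasurableSpace Ω} (μ : Measure Ω) [IsProbabilityMeasure μ]
    (L : ℕ) (ℱ : ℕ → MeasurableSpace Ω)
    (hℱ_mono : ∀ k l : ℕ, k ≤ l → l ≤ L → ℱ k ≤ ℱ l)
    (hℱ_le : ∀ l : ℕ, l ≤ L → ℱ l ≤ mΩ)
    (qstar : ι → ℝ) (qhat : ℕ → Ω → ι → ℝ)
    (hmeas : ∀ l : ℕ, l ≤ L → Measurable[ℱ l] (qhat l))
    (b δ : ℝ) (hb : 0 < b) (hδ0 : 0 ≤ δ) (hδ1 : δ < 1)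
    (h0 : ENNReal.ofReal (1 - δ / ((L : ℝ) + 1)) ≤
      μ {ω | ∀ i, |qhat 0 ω i - qstar i| ≤ b})
    (hstep : ∀ l : ℕ, 1 ≤ l → l ≤ L →
      ∀ᵐ ω ∂μ, (∀ i, |qhat (l - 1) ω i - qstar i| ≤ b / 2 ^ (l - 1)) →
        1 - δ / ((L : ℝ) + 1) ≤
          (μ[Set.indicator {ω' | ∀ i, |qhat l ω' i - qstar i| ≤ b / 2 ^ l}
              (fun _ => (1 : ℝ)) | ℱ (l - 1)]) ω) :
    ENNReal.ofReal ((1 - δ / ((L : ℝ) + 1)) ^ (L + 1)) ≤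
        μ {ω | ∀ i, |qhat L ω i - qstar i| ≤ b / 2 ^ L} ∧
      1 - δ ≤ (1 - δ / ((L : ℝ) + 1)) ^ (L + 1) := by
  set c : ℝ := 1 - δ / ((L : ℝ) + 1) with hc
  have hL1 : (0:ℝ) < (L:ℝ) + 1 := by positivity
  have hδL : δ / ((L:ℝ)+1) ≤ δ := div_le_self hδ0 (by linarith [Nat.cast_nonneg (α := ℝ) L])
  have hδL0 : 0 ≤ δ / ((L:ℝ)+1) := by positivity
  have hc0 : 0 ≤ c := by rw [hc]; linarith
  have hAmeas : ∀ l, l ≤ L →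
      MeasurableSet[ℱ l] {ω | ∀ i, |qhat l ω i - qstar i| ≤ b / 2 ^ l} := by
    intro l hl
    have h := hmeas l hl
    have hEq : {ω | ∀ i, |qhat l ω i - qstar i| ≤ b / 2 ^ l}
        = ⋂ i, {ω | |qhat l ω i - qstar i| ≤ b / 2 ^ l} := by
      ext ω; simp [Set.mem_iInter]
    rw [hEq]
    letI : MeasurableSpace Ω := ℱ l
    refine MeasurableSet.iInter fun i => ?_
    have hi : Measurable fun ω => qhat l ω i := (measurable_pi_apply i).comp h
    exact ((hi.sub measurable_const).abs) measurableSet_Iic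
  have hAmeas' : ∀ l, l ≤ L →
      MeasurableSet {ω | ∀ i, |qhat l ω i - qstar i| ≤ b / 2 ^ l} :=
    fun l hl => hℱ_le l hl _ (hAmeas l hl)
  have key : ∀ l, l ≤ L →
      c ^ (l+1) ≤ (μ {ω | ∀ i, |qhat l ω i - qstar i| ≤ b / 2 ^ l}).toReal := by
    intro l
    induction l with
    | zero =>
      intro _
      rw [pow_one]
      have := (ENNReal.ofReal_le_iff_le_toReal (measure_ne_top μ _)).mp h0
      simpa using this
    | succ l ih =>
      intro hl1
      have hlL : l ≤ L := Nat.le_of_succ_le hl1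
      have hm : ℱ l ≤ mΩ := hℱ_le l hlL
      haveI : SigmaFinite (μ.trim hm) := inferInstance
      set S : Set Ω := {ω | ∀ i, |qhat l ω i - qstar i| ≤ b / 2 ^ l} with hS
      set T : Set Ω := {ω | ∀ i, |qhat (l+1) ω i - qstar i| ≤ b / 2 ^ (l+1)} with hT
      have hSm : MeasurableSet[ℱ l] S := hAmeas l hlL
      have hSm' : MeasurableSet S := hAmeas' l hlL
      have hTm' : MeasurableSet T := hAmeas' (l+1) hl1
      set f : Ω → ℝ := Set.indicator T (fun _ => (1:ℝ)) with hf
      have hfint : Integrable f μ := (integrable_const (1:ℝ)).indicator hTm'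
      have hstep' := hstep (l+1) (Nat.succ_le_succ (Nat.zero_le l)) hl1
      simp only [Nat.add_sub_cancel] at hstep'
      have h1 : ∫ ω in S, (μ[f | ℱ l]) ω ∂μ = ∫ ω in S, f ω ∂μ :=
        setIntegral_condExp hm hfint hSm
      have h2 : ∫ ω in S, f ω ∂μ = (μ (S ∩ T)).toReal := by
        rw [hf, setIntegral_indicator hTm']
        simp
        rfl
      have h3 : (μ S).toReal * c ≤ ∫ ω in S, (μ[f | ℱ l]) ω ∂μ := by
        have hmono : ∫ ω in S, c ∂μ ≤ ∫ ω in S, (μ[f | ℱ l]) ω ∂μ := by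
          refine setIntegral_mono_ae_restrict
            (integrableOn_const (measure_ne_top μ S))
            integrable_condExp.integrableOn ?_
          refine (ae_restrict_iff' hSm').mpr ?_
          exact hstep'.mono fun ω h hω => h hω
        simp at hmono; exact hmono
      have h4 : (μ (S ∩ T)).toReal ≤ (μ T).toReal :=
        ENNReal.toReal_mono (measure_ne_top μ _) (measure_mono Set.inter_subset_right)
      calc c ^ (l+1+1) = c ^ (l+1) * c := pow_succ c (l+1)
        _ ≤ (μ S).toReal * c := mul_le_mul_of_nonneg_right (ih hlL) hc0
        _ ≤ ∫ ω in S, (μ[f | ℱ l]) ω ∂μ := h3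
        _ = (μ (S ∩ T)).toReal := by rw [h1, h2]
        _ ≤ (μ T).toReal := h4
  constructor
  · exact (ENNReal.ofReal_le_iff_le_toReal (measure_ne_top μ _)).mpr (key L le_rfl)
  · have h := one_add_mul_le_pow (a := -(δ/((L:ℝ)+1))) (by linarith) (L+1)
    have hcancel : ((L:ℝ)+1) * (δ/((L:ℝ)+1)) = δ := mul_div_cancel₀ δ (ne_of_gt hL1)
    have hcast : ((L+1 : ℕ) : ℝ) = (L:ℝ) + 1 := by push_cast; ring
    rw [hcast] at h
    have : (1 + -(δ/((L:ℝ)+1))) = c := by rw [hc]; ring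
    rw [this] at h
    linarith
end

section
/- Let γ ∈ [0.9, 1) and let t satisfy 10 ≤ t ≤ 1/(1−γ), and set p = 1/t. Consider the hard MDP instance M_{γ,t} with S = {1,2}, A = {a₁,a₂}, P_{s,a₁} = P_{s,a₂} given by the transition matrix [[1−p, p],[p, 1−p]], reward r(1,·) = 1 and r(2,·) = 0, and discount γ. Then every policy of M_{γ,t} is optimal, every policy induces a kernel satisfying the (1,p)-Doeblin condition, and for any optimal policy π, ν^π(M_{γ,t})(1,a₁)² ≥ t / (3⁵ (1−γ)²). -/
set_option maxHeartbeats 4000000 in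
/-- for the hard two-state MDP instance `M_{γ,t}` with `p = 1/t`,
`γ ∈ [0.9,1)` and `10 ≤ t ≤ 1/(1−γ)` (states/actions encoded by `Fin 2`, with state `1 ↦ 0`
and action `a₁ ↦ 0`): every policy is optimal, every policy induces a `(1,p)`-Doeblin
kernel, and every optimal policy `π` satisfies `ν^π(M_{γ,t})(1,a₁)² ≥ t/(3⁵(1−γ)²)`. -/
theorem hard_mdp_nu_sq_lower_bound
    (γ t : ℝ) (hγ0 : 0.9 ≤ γ) (hγ1 : γ < 1) (ht0 : 10 ≤ t) (ht1 : t ≤ 1 / (1 - γ))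
    -- the hard MDP instance M_{γ,t}, with p = 1/t
    (P : Fin 2 → Fin 2 → Fin 2 → ℝ)
    (hP : ∀ s a s', P s a s' = if s = s' then 1 - 1 / t else 1 / t)
    (r : Fin 2 → Fin 2 → ℝ)
    (hr : ∀ s a, r s a = if s = 0 then 1 else 0)
    -- its optimal q-function (characterized by the Bellman optimality equation)
    (qstar : Fin 2 → Fin 2 → ℝ)
    (hqstar : ∀ s a, qstar s a = r s a + γ * ∑ s', P s a s' * (⨆ b, qstar s' b)) :
    -- every policy is optimal (its q-function equals q*)
    (∀ π : Fin 2 → Fin 2, ∀ s a,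
      qstar s a = r s a + γ * ∑ s', P s a s' * qstar s' (π s')) ∧
    -- every policy induces a (1, 1/t)-Doeblin kernel
    (∀ π : Fin 2 → Fin 2, ∃ ψ : Fin 2 → ℝ, (∀ s', 0 ≤ ψ s') ∧ (∑ s', ψ s' = 1) ∧
      ∀ s s', (1 / t) * ψ s' ≤ ((Matrix.of fun u u' => P u (π u) u') ^ 1) s s') ∧
    -- and any optimal policy π satisfies the lower bound on ν^π(M_{γ,t})(1,a₁)²
    (∀ π : Fin 2 → Fin 2,
      (∀ s a, qstar s a = r s a + γ * ∑ s', P s a s' * qstar s' (π s')) →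
      t / (3 ^ 5 * (1 - γ) ^ 2) ≤
        ∑ y : Fin 2 × Fin 2,
          (((1 - γ • (Matrix.of fun x z : Fin 2 × Fin 2 =>
                if z.2 = π z.1 then P x.1 x.2 z.1 else 0))⁻¹ (0, 0) y) ^ 2) *
            (γ ^ 2 * (∑ s', P y.1 y.2 s' * (⨆ b, qstar s' b) ^ 2 -
              (∑ s', P y.1 y.2 s' * (⨆ b, qstar s' b)) ^ 2))) := by
  have h2 : ∀ x : Fin 2, x = 0 ∨ x = 1 := by decide
  have ht0' : (0:ℝ) < t := by linarith
  have h1γ : (0:ℝ) < 1 - γ := by linarith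
  set p : ℝ := 1/t with hp
  have hp0 : 0 < p := by positivity
  have htp : t * p = 1 := by rw [hp]; field_simp
  have hp10 : p ≤ 1/10 := by
    rw [hp, div_le_div_iff₀ ht0' (by norm_num)]; linarith
  have htγ : t * (1 - γ) ≤ 1 := (le_div_iff₀ h1γ).mp ht1
  have hγp : 1 - γ ≤ p := by
    rw [hp, le_div_iff₀ ht0']; linarith [mul_comm t (1-γ)]
  -- q* is constant in the action
  have hq01 : ∀ s b, qstar s b = qstar s 0 := by
    intro s b
    rcases h2 b with h | h
    · rw [h]
    · rw [h, hqstar s 1, hqstar s 0, hr, hr]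
      congr 1
      congr 1
      refine Finset.sum_congr rfl fun s' _ => ?_
      rw [hP, hP]
  have hsup : ∀ s, (⨆ b, qstar s b) = qstar s 0 := by
    intro s
    apply le_antisymm
    · exact ciSup_le fun b => le_of_eq (hq01 s b)
    · exact le_ciSup (Set.Finite.bddAbove (Set.finite_range _)) 0
  -- entries of the transition matrix
  have hP00 : ∀ a, P 0 a 0 = 1 - p := fun a => by rw [hP]; simp
  have hP01 : ∀ a, P 0 a 1 = p := fun a => by rw [hP]; simp
  have hP10 : ∀ a, P 1 a 0 = p := fun a => by rw [hP]; simp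
  have hP11 : ∀ a, P 1 a 1 = 1 - p := fun a => by rw [hP]; simp
  -- the Bellman fixed-point equations for the two values
  have hV0 : qstar 0 0 = 1 + γ * ((1-p) * qstar 0 0 + p * qstar 1 0) := by
    have h := hqstar 0 0
    rw [hr, Fin.sum_univ_two, hP00, hP01, hsup, hsup, if_pos rfl] at h
    linear_combination h
  have hV1 : qstar 1 0 = γ * (p * qstar 0 0 + (1-p) * qstar 1 0) := by
    have h := hqstar 1 0
    rw [hr, Fin.sum_univ_two, hP10, hP11, hsup, hsup,
      if_neg (by decide : ¬ ((1:Fin 2) = 0))] at h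
    linear_combination h
  set v : ℝ := qstar 0 0 - qstar 1 0 with hv
  have hΔ : v * (1 - γ + 2*γ*p) = 1 := by
    rw [hv]; linear_combination hV0 - hV1
  have he : 0 < 1 - γ + 2*γ*p := by nlinarith
  have hv3 : t/3 ≤ v := by
    have hveq : v = 1/(1 - γ + 2*γ*p) := by rw [eq_div_iff he.ne']; exact hΔ
    rw [hveq, div_le_div_iff₀ (by norm_num) he]
    nlinarith
  -- the common variance term
  have hvar : ∀ s a : Fin 2,
      γ ^ 2 * (∑ s', P s a s' * (⨆ b, qstar s' b) ^ 2 -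
        (∑ s', P s a s' * (⨆ b, qstar s' b)) ^ 2)
      = γ^2 * (p*(1-p)) * v^2 := by
    intro s a
    rcases h2 s with h | h <;> subst h <;>
      rw [Fin.sum_univ_two, Fin.sum_univ_two] <;>
      simp only [hP00, hP01, hP10, hP11, hsup] <;> rw [hv] <;> ring
  refine ⟨?_, ?_, ?_⟩
  · -- every policy is optimal
    intro π s a
    rw [hqstar s a]
    congr 1
    congr 1
    refine Finset.sum_congr rfl fun s' _ => ?_
    rw [hsup, hq01 s' (π s')]
  · -- Doeblin condition
    intro π
    refine ⟨fun _ => 1/2, fun _ => by norm_num, by rw [Fin.sum_univ_two]; norm_num, ?_⟩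
    intro s s'
    rw [pow_one]
    show p * (1/2) ≤ (Matrix.of fun u u' => P u (π u) u') s s'
    rw [Matrix.of_apply, hP]
    split_ifs <;> linarith
  · -- the variance lower bound
    intro π _
    have hD0 : ((1-γ) * (1 - γ + 2*γ*p)) ≠ 0 := by positivity
    set A : Matrix (Fin 2 × Fin 2) (Fin 2 × Fin 2) ℝ :=
      1 - γ • (Matrix.of fun x z : Fin 2 × Fin 2 =>
        if z.2 = π z.1 then P x.1 x.2 z.1 else 0) with hA
    set B : Matrix (Fin 2 × Fin 2) (Fin 2 × Fin 2) ℝ :=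
      Matrix.of fun x y =>
        (if x = y then 1 else 0) +
        (if y.2 = π y.1 then
          (if x.1 = y.1 then (1-γ*(1-p)) / ((1-γ) * (1 - γ + 2*γ*p)) - 1
           else γ*p / ((1-γ) * (1 - γ + 2*γ*p))) else 0) with hB
    have hAB : A * B = 1 := by
      ext ⟨x1, x2⟩ ⟨z1, z2⟩
      rw [Matrix.mul_apply, Fintype.sum_prod_type]
      simp only [hA, hB, Matrix.sub_apply, Matrix.one_apply, Matrix.smul_apply,
        Matrix.of_apply, Fin.sum_univ_two, smul_eq_mul, hP]
      rcases h2 (π 0) with h0 | h0 <;> rcases h2 (π 1) with h1 | h1 <;>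
        rcases h2 x1 with hx1 | hx1 <;> subst hx1 <;>
        rcases h2 z1 with hz1 | hz1 <;> subst hz1 <;>
        rcases h2 x2 with hx2 | hx2 <;> subst hx2 <;>
        rcases h2 z2 with hz2 | hz2 <;> subst hz2 <;>
        simp only [h0, h1, Prod.mk.injEq] <;>
        norm_num <;> field_simp <;> ring
    have hAinv : A⁻¹ = B := Matrix.inv_eq_right_inv hAB
    -- the key inequality
    have key : ∀ b0 b1 b2 b3 : ℝ, b0 + b1 + b2 + b3 = 1/(1-γ) →
        t / (3 ^ 5 * (1 - γ) ^ 2) ≤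
          b0^2 * (γ^2 * (p*(1-p)) * v^2) + b1^2 * (γ^2 * (p*(1-p)) * v^2) +
          b2^2 * (γ^2 * (p*(1-p)) * v^2) + b3^2 * (γ^2 * (p*(1-p)) * v^2) := by
      intro b0 b1 b2 b3 hsum
      have hv0 : 0 < v := lt_of_lt_of_le (by linarith) hv3
      have hv2 : t^2/9 ≤ v^2 := by nlinarith
      have hpv : t/9 ≤ p * v^2 := by
        have h1 : p * (t^2/9) ≤ p * v^2 := mul_le_mul_of_nonneg_left hv2 hp0.le
        have h2' : p * (t^2/9) = t/9 := by rw [hp]; field_simp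
        linarith
      have hγ2 : 81/100 ≤ γ^2 := by nlinarith
      have h1p : (9:ℝ)/10 ≤ 1 - p := by linarith
      have hA1 : (9/10)*(t/9) ≤ (1-p)*(p*v^2) :=
        mul_le_mul h1p hpv (by linarith) (by linarith)
      have hA2 : (81/100)*((9/10)*(t/9)) ≤ γ^2*((1-p)*(p*v^2)) :=
        mul_le_mul hγ2 hA1 (by nlinarith) (by positivity)
      have hc : 81/1000 * t ≤ γ^2 * (p*(1-p)) * v^2 := by nlinarith
      have hs2 : (b0+b1+b2+b3)^2 = 1/(1-γ)^2 := by
        rw [hsum]; rw [div_pow]; norm_num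
      have hQ : 1/(4*(1-γ)^2) ≤ b0^2+b1^2+b2^2+b3^2 := by
        have h4 : (1:ℝ)/(4*(1-γ)^2) = (1/(1-γ)^2)/4 := by
          rw [div_div, mul_comm]
        nlinarith [sq_nonneg (b0-b1), sq_nonneg (b0-b2), sq_nonneg (b0-b3),
          sq_nonneg (b1-b2), sq_nonneg (b1-b3), sq_nonneg (b2-b3)]
      have hcpos : (0:ℝ) ≤ 81/1000 * t := by linarith
      have hmul : (1/(4*(1-γ)^2)) * (81/1000*t) ≤
          (b0^2+b1^2+b2^2+b3^2) * (γ^2 * (p*(1-p)) * v^2) :=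
        mul_le_mul hQ hc hcpos (le_trans (by positivity) hQ)
      have hfin : t / (3 ^ 5 * (1 - γ) ^ 2) ≤ (1/(4*(1-γ)^2)) * (81/1000*t) := by
        have hX : (0:ℝ) < (1-γ)^2 := by positivity
        rw [show (1/(4*(1-γ)^2)) * (81/1000*t) = (81*t)/(4000*(1-γ)^2) by
            field_simp; ring,
          div_le_div_iff₀ (by positivity) (by positivity)]
        nlinarith [mul_pos ht0' hX]
      linarith
    -- assemble
    simp only [hvar, hAinv]
    rw [Fintype.sum_prod_type, Fin.sum_univ_two, Fin.sum_univ_two, Fin.sum_univ_two]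
    have hrow : B (0,0) (0,0) + B (0,0) (0,1) + B (0,0) (1,0) + B (0,0) (1,1)
        = 1/(1-γ) := by
      simp only [hB, Matrix.of_apply]
      rcases h2 (π 0) with h0 | h0 <;> rcases h2 (π 1) with h1 | h1 <;>
        simp only [h0, h1, Prod.mk.injEq] <;> norm_num <;> field_simp <;> ring
    have := key (B (0,0) (0,0)) (B (0,0) (0,1)) (B (0,0) (1,0)) (B (0,0) (1,1)) hrow
    linarith
end
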